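/- Let u be as in the Aleksandrov solution setting (|∂u(E)| = Σ_k α_k δ_{d_k}(E), ∂u(ℝ²) ⊆ B(0,1), Σ α_k = π = |B(0,1)|). Define the cells C_k = {y ∈ B(0,1) : u* is differentiable at y and ∇u*(y) = d_k}. Then |C_k| = α_k for every k. -/

import Mathlib

open RealInnerProductSpace MeasureTheory Classical

/-- The subgradient of `u` at a point `x`. -/
def SG (u : EuclideanSpace ℝ (Fin 2) → ℝ) (x : EuclideanSpace ℝ (Fin 2)) :
    Set (EuclideanSpace ℝ (Fin 2)) :=
  {p | ∀ z, u x + ⟪p, z - x⟫ ≤ u z}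

/-- The subgradient image of a set `E`. -/
def SGs (u : EuclideanSpace ℝ (Fin 2) → ℝ) (E : Set (EuclideanSpace ℝ (Fin 2))) :
    Set (EuclideanSpace ℝ (Fin 2)) :=
  ⋃ x ∈ E, SG u x

section Aux

noncomputable abbrev E2' := EuclideanSpace ℝ (Fin 2)

lemma vol_cb' : volume (Metric.closedBall (0:E2') 1) = ENNReal.ofReal Real.pi := by
  rw [EuclideanSpace.volume_closedBall]
  simp [Fintype.card_fin]
  rw [show (1:ℝ) + 1 = 2 by norm_num, Real.Gamma_two, Real.sq_sqrt Real.pi_pos.le]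
  simp

lemma vol_ball' : volume (Metric.ball (0:E2') 1) = ENNReal.ofReal Real.pi := by
  rw [EuclideanSpace.volume_ball]
  simp [Fintype.card_fin]
  rw [show (1:ℝ) + 1 = 2 by norm_num, Real.Gamma_two, Real.sq_sqrt Real.pi_pos.le]
  simp

lemma hyp_null' (v : E2') (hv : v ≠ 0) (c : ℝ) : volume {w : E2' | ⟪v, w⟫ = c} = 0 := by
  set k : Submodule ℝ E2' := LinearMap.ker ((innerSL ℝ v) : E2' →L[ℝ] ℝ).toLinearMap with hk
  have hker : k ≠ ⊤ := by
    intro h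
    have hvk : v ∈ k := h ▸ Submodule.mem_top
    have : ⟪v, v⟫ = (0:ℝ) := hvk
    exact hv (inner_self_eq_zero.mp this)
  have h0 : volume (k : Set E2') = 0 := MeasureTheory.Measure.addHaar_submodule _ k hker
  by_cases hc : ∃ w : E2', ⟪v, w⟫ = c
  · obtain ⟨w1, hw1⟩ := hc
    have hpre : (· + w1) ⁻¹' {w : E2' | ⟪v, w⟫ = c} = (k : Set E2') := by
      ext w
      simp only [Set.mem_preimage, Set.mem_setOf_eq, SetLike.mem_coe, hk, LinearMap.mem_ker]
      constructor
      · intro h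
        show ⟪v, w⟫ = 0
        have := inner_add_right (𝕜 := ℝ) v w w1
        rw [h, hw1] at this; linarith [this]
      · intro h
        have hw : ⟪v, w⟫ = (0:ℝ) := h
        rw [inner_add_right, hw, hw1, zero_add]
    have := measure_preimage_add_right (volume : Measure E2') w1 {w : E2' | ⟪v, w⟫ = c}
    rw [hpre] at this
    rw [← this, h0]
  · have : {w : E2' | ⟪v, w⟫ = c} = ∅ := by
      ext w; simp only [Set.mem_setOf_eq, Set.mem_empty_iff_false, iff_false]
      exact fun hw => hc ⟨w, hw⟩
    rw [this]; exact measure_empty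

lemma grad_affine' (v : E2') (c : ℝ) (y : E2') :
    HasGradientAt (fun w => ⟪v, w⟫ - c) v y := by
  rw [hasGradientAt_iff_hasFDerivAt]
  exact ((InnerProductSpace.toDual ℝ E2' v).hasFDerivAt).sub_const c

end Aux

/-- in the Aleksandrov solution setting, the cells
C_k = {y ∈ B(0,1) : ∇u*(y) = d_k} satisfy |C_k| = α_k. -/
theorem stmt8 (u : EuclideanSpace ℝ (Fin 2) → ℝ) (hu : ConvexOn ℝ Set.univ u)
    (K : ℕ) [NeZero K] (d : Fin K → EuclideanSpace ℝ (Fin 2)) (hd : Function.Injective d)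
    (α : Fin K → ℝ) (hα : ∀ k, 0 < α k) (hsum : ∑ k, α k = Real.pi)
    (hmass : ∀ E : Set (EuclideanSpace ℝ (Fin 2)), MeasurableSet E →
      volume (SGs u E) = ∑ k, (if d k ∈ E then ENNReal.ofReal (α k) else 0))
    (hsub : SGs u Set.univ ⊆ Metric.closedBall 0 1)
    (uStar : EuclideanSpace ℝ (Fin 2) → ℝ)
    (hStar : ∀ y, uStar y = ⨆ x, (⟪x, y⟫ - u x))
    (C : Fin K → Set (EuclideanSpace ℝ (Fin 2)))
    (hC : ∀ k, C k = {y | y ∈ Metric.closedBall (0 : EuclideanSpace ℝ (Fin 2)) 1 ∧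
      HasGradientAt uStar (d k) y}) :
    ∀ k, volume (C k) = ENNReal.ofReal (α k) := by
  classical
  set a : Fin K → E2' → ℝ := fun j w => ⟪d j, w⟫ - u (d j) with ha
  set A : Fin K → Set E2' := fun k => SG u (d k) with hA
  -- basic subgradient consequence
  have hAprop : ∀ k, ∀ w ∈ A k, ∀ x, ⟪x, w⟫ - u x ≤ a k w := by
    intro k w hw x
    have h := hw x
    have e1 : ⟪w, x - d k⟫ = ⟪w, x⟫ - ⟪w, d k⟫ := inner_sub_right _ _ _
    have e2 : ⟪w, x⟫ = ⟪x, w⟫ := real_inner_comm _ _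
    have e3 : ⟪w, d k⟫ = ⟪d k, w⟫ := real_inner_comm _ _
    simp only [ha]
    linarith [h, e1 ▸ h]
  -- A k is contained in the closed ball
  have hAsub : ∀ k, A k ⊆ Metric.closedBall (0:E2') 1 := by
    intro k w hw
    exact hsub (Set.mem_iUnion₂.mpr ⟨d k, Set.mem_univ _, hw⟩)
  -- mass of A k
  have hofα : ∀ k, (0:ℝ) ≤ α k := fun k => (hα k).le
  have hmassk : ∀ k, volume (A k) = ENNReal.ofReal (α k) := by
    intro k
    have h := hmass {d k} (measurableSet_singleton _)
    have h1 : SGs u {d k} = A k := by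
      simp [SGs, hA]
    rw [h1] at h
    rw [h]
    have : ∀ j : Fin K, (if d j ∈ ({d k} : Set E2') then ENNReal.ofReal (α j) else 0)
        = if j = k then ENNReal.ofReal (α j) else 0 := by
      intro j
      by_cases hj : j = k
      · simp [hj]
      · have : d j ≠ d k := fun h' => hj (hd h')
        simp [hj, this]
    simp only [Set.mem_singleton_iff, hd.eq_iff]
    simp
  -- mass of the union
  have hofsum : ∑ k, ENNReal.ofReal (α k) = ENNReal.ofReal Real.pi := by
    rw [← hsum]
    exact (ENNReal.ofReal_sum_of_nonneg (fun i _ => hofα i)).symm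
  have hS'eq : SGs u (Set.range d) = ⋃ k, A k := by
    simp [SGs, hA, Set.biUnion_range]
  have hS'mass : volume (⋃ k, A k) = ENNReal.ofReal Real.pi := by
    have h := hmass (Set.range d) ((Set.finite_range d).measurableSet)
    rw [hS'eq] at h
    rw [h, ← hofsum]
    exact Finset.sum_congr rfl (fun j _ => by simp)
  have hS'sub : (⋃ k, A k) ⊆ Metric.closedBall (0:E2') 1 :=
    Set.iUnion_subset hAsub
  -- density of ⋃ A k in the ball
  have hπfin : ENNReal.ofReal Real.pi ≠ ⊤ := ENNReal.ofReal_ne_top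
  have hdense : Metric.ball (0:E2') 1 ⊆ closure (⋃ k, A k) := by
    intro w hw
    rw [mem_closure_iff]
    intro o ho hwo
    by_contra hno
    rw [Set.not_nonempty_iff_eq_empty] at hno
    have hsub2 : (⋃ k, A k) ⊆ Metric.closedBall (0:E2') 1 \ (o ∩ Metric.ball 0 1) := by
      intro z hz
      refine ⟨hS'sub hz, ?_⟩
      intro hzo
      have : z ∈ o ∩ ⋃ k, A k := ⟨hzo.1, hz⟩
      rw [hno] at this
      exact this
    have hmeas : MeasurableSet (o ∩ Metric.ball (0:E2') 1) :=
      (ho.inter Metric.isOpen_ball).measurableSet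
    have hpos : 0 < volume (o ∩ Metric.ball (0:E2') 1) :=
      (ho.inter Metric.isOpen_ball).measure_pos volume ⟨w, hwo, hw⟩
    have hvd : volume (Metric.closedBall (0:E2') 1 \ (o ∩ Metric.ball 0 1))
        = volume (Metric.closedBall (0:E2') 1) - volume (o ∩ Metric.ball (0:E2') 1) := by
      apply measure_diff
      · exact (Set.inter_subset_right).trans Metric.ball_subset_closedBall
      · exact hmeas.nullMeasurableSet
      · exact ((measure_mono ((Set.inter_subset_right).trans Metric.ball_subset_closedBall)).trans_lt
          (by rw [vol_cb']; exact ENNReal.ofReal_lt_top)).ne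
    have hlt : volume (Metric.closedBall (0:E2') 1 \ (o ∩ Metric.ball 0 1))
        < ENNReal.ofReal Real.pi := by
      rw [hvd, vol_cb']
      exact ENNReal.sub_lt_self hπfin
        (ENNReal.ofReal_pos.mpr Real.pi_pos).ne' hpos.ne'
    have := (measure_mono hsub2).trans_lt hlt
    rw [hS'mass] at this
    exact lt_irrefl _ this
  -- the uniform bound on the ball
  have hFx : ∀ x : E2', ∀ w ∈ Metric.ball (0:E2') 1, ∃ k, ⟪x, w⟫ - u x ≤ a k w := by
    intro x w hw
    have hcl : IsClosed (⋃ k, {w : E2' | ⟪x, w⟫ - u x ≤ a k w}) := by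
      apply isClosed_iUnion_of_finite
      intro k
      apply isClosed_le
      · exact (continuous_const.inner continuous_id).sub continuous_const
      · exact (continuous_const.inner continuous_id).sub continuous_const
    have hsub3 : (⋃ k, A k) ⊆ ⋃ k, {w : E2' | ⟪x, w⟫ - u x ≤ a k w} := by
      intro z hz
      obtain ⟨k, hk⟩ := Set.mem_iUnion.mp hz
      exact Set.mem_iUnion.mpr ⟨k, hAprop k z hk x⟩
    have := hcl.closure_subset_iff.mpr hsub3
    exact Set.mem_iUnion.mp (this (hdense hw))
  -- open cells
  set U : Fin K → Set E2' := fun k =>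
    Metric.ball 0 1 ∩ {w | ∀ j, j ≠ k → a j w < a k w} with hU
  have hUopen : ∀ k, IsOpen (U k) := by
    intro k
    apply Metric.isOpen_ball.inter
    have : {w : E2' | ∀ j, j ≠ k → a j w < a k w}
        = ⋂ j, ⋂ (_ : j ≠ k), {w : E2' | a j w < a k w} := by
      ext w; simp
    rw [this]
    apply isOpen_iInter_of_finite
    intro j
    apply isOpen_iInter_of_finite
    intro _
    apply isOpen_lt
    · exact (continuous_const.inner continuous_id).sub continuous_const
    · exact (continuous_const.inner continuous_id).sub continuous_const
  -- on U k, uStar is affine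
  have hUbound : ∀ k, ∀ w ∈ U k, ∀ x, ⟪x, w⟫ - u x ≤ a k w := by
    intro k w hw x
    obtain ⟨j, hj⟩ := hFx x w hw.1
    by_cases hjk : j = k
    · rwa [hjk] at hj
    · exact hj.trans (hw.2 j hjk).le
  have huStarU : ∀ k, ∀ w ∈ U k, uStar w = a k w := by
    intro k w hw
    rw [hStar w]
    apply le_antisymm
    · exact ciSup_le (fun x => hUbound k w hw x)
    · have hbdd : BddAbove (Set.range fun x => ⟪x, w⟫ - u x) := by
        refine ⟨a k w, ?_⟩
        rintro _ ⟨x, rfl⟩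
        exact hUbound k w hw x
      exact le_ciSup hbdd (d k)
  have hgradU : ∀ k, ∀ y ∈ U k, HasGradientAt uStar (d k) y := by
    intro k y hy
    have haff : HasGradientAt (fun w : E2' => ⟪d k, w⟫ - u (d k)) (d k) y :=
      grad_affine' (d k) (u (d k)) y
    apply haff.congr_of_eventuallyEq
    filter_upwards [(hUopen k).mem_nhds hy] with w hw
    exact huStarU k w hw
  have hUC : ∀ k, U k ⊆ C k := by
    intro k y hy
    rw [hC k]
    exact ⟨Metric.ball_subset_closedBall hy.1, hgradU k y hy⟩
  have hCU : ∀ j k, j ≠ k → ∀ y, y ∈ C k → y ∉ U j := by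
    intro j k hjk y hyC hyU
    have h1 : HasGradientAt uStar (d j) y := hgradU j y hyU
    have h2 : HasGradientAt uStar (d k) y := by
      rw [hC k] at hyC; exact hyC.2
    exact hjk (hd (h1.unique h2))
  have hdisj : Pairwise (Function.onFun Disjoint U) := by
    intro j k hjk
    rw [Function.onFun, Set.disjoint_left]
    intro w hwj hwk
    have h1 := hwj.2 k (Ne.symm hjk)
    have h2 := hwk.2 j hjk
    linarith
  -- hyperplanes
  set H : Fin K → Set E2' := fun k =>
    Metric.sphere (0:E2') 1 ∪ ⋃ j, ⋃ (_ : j ≠ k), {w : E2' | ⟪d j - d k, w⟫ = u (d j) - u (d k)}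
    with hH
  have hHnull : ∀ k, volume (H k) = 0 := by
    intro k
    apply measure_union_null
    · -- sphere is null
      have h1 : Metric.sphere (0:E2') 1 = Metric.closedBall (0:E2') 1 \ Metric.ball 0 1 := by
        ext w
        simp only [Metric.mem_sphere, Metric.mem_closedBall, Metric.mem_ball, Set.mem_diff,
          not_lt, dist_zero_right]
        constructor
        · intro h; exact ⟨h.le, h.ge⟩
        · intro h; exact le_antisymm h.1 h.2
      rw [h1]
      have := measure_diff (Metric.ball_subset_closedBall (x := (0:E2')) (ε := 1))
        measurableSet_ball.nullMeasurableSet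
        (by rw [vol_ball']; exact ENNReal.ofReal_ne_top)
      rw [this, vol_ball', vol_cb', tsub_self]
    · apply measure_iUnion_null
      intro j
      apply measure_iUnion_null
      intro hjk
      exact hyp_null' (d j - d k) (sub_ne_zero.mpr (fun h => hjk (hd h))) _
  -- A k ⊆ U k ∪ H k
  have hAU : ∀ k, A k ⊆ U k ∪ H k := by
    intro k w hw
    have hle : ∀ j, a j w ≤ a k w := by
      intro j
      have := hAprop k w hw (d j)
      simpa [ha] using this
    have hcb : w ∈ Metric.closedBall (0:E2') 1 := hAsub k hw
    by_cases hball : w ∈ Metric.ball (0:E2') 1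
    · by_cases hstrict : ∀ j, j ≠ k → a j w < a k w
      · exact Or.inl ⟨hball, hstrict⟩
      · push_neg at hstrict
        obtain ⟨j, hjk, hge⟩ := hstrict
        have heq : a j w = a k w := le_antisymm (hle j) hge
        refine Or.inr (Or.inr ?_)
        refine Set.mem_iUnion.mpr ⟨j, Set.mem_iUnion.mpr ⟨hjk, ?_⟩⟩
        show ⟪d j - d k, w⟫ = u (d j) - u (d k)
        have := inner_sub_left (𝕜 := ℝ) (d j) (d k) w
        simp only [ha] at heq
        rw [this]; linarith
    · refine Or.inr (Or.inl ?_)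
      rw [Metric.mem_closedBall] at hcb
      rw [Metric.mem_ball] at hball
      rw [Metric.mem_sphere]
      linarith [not_lt.mp hball]
  -- lower bound on volume of U k
  have hUge : ∀ k, ENNReal.ofReal (α k) ≤ volume (U k) := by
    intro k
    calc ENNReal.ofReal (α k) = volume (A k) := (hmassk k).symm
    _ ≤ volume (U k ∪ H k) := measure_mono (hAU k)
    _ ≤ volume (U k) + volume (H k) := measure_union_le _ _
    _ = volume (U k) := by rw [hHnull k, add_zero]
  -- total bound
  have hUfin : ∀ k, volume (U k) ≠ ⊤ := by
    intro k
    have : volume (U k) ≤ ENNReal.ofReal Real.pi := by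
      rw [← vol_ball']
      exact measure_mono (Set.inter_subset_left)
    exact (this.trans_lt ENNReal.ofReal_lt_top).ne
  have hUsum : ∑ k, volume (U k) ≤ ENNReal.ofReal Real.pi := by
    have h1 : volume (⋃ k, U k) = ∑' k, volume (U k) :=
      measure_iUnion hdisj (fun k => (hUopen k).measurableSet)
    have h2 : (⋃ k, U k) ⊆ Metric.ball (0:E2') 1 :=
      Set.iUnion_subset (fun k => Set.inter_subset_left)
    calc ∑ k, volume (U k) = ∑' k, volume (U k) := (tsum_fintype _).symm
    _ = volume (⋃ k, U k) := h1.symm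
    _ ≤ volume (Metric.ball (0:E2') 1) := measure_mono h2
    _ = ENNReal.ofReal Real.pi := vol_ball'
  -- exact volume of U k
  have hUvol : ∀ k, volume (U k) = ENNReal.ofReal (α k) := by
    have hr : ∀ k, α k ≤ (volume (U k)).toReal := by
      intro k
      exact (ENNReal.ofReal_le_iff_le_toReal (hUfin k)).mp (hUge k)
    have hrs : ∑ k, (volume (U k)).toReal ≤ Real.pi := by
      have := ENNReal.toReal_mono hπfin hUsum
      rwa [ENNReal.toReal_sum (fun i _ => hUfin i), ENNReal.toReal_ofReal Real.pi_pos.le] at this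
    have hsums : ∑ k, α k = ∑ k, (volume (U k)).toReal := by
      apply le_antisymm
      · exact Finset.sum_le_sum (fun i _ => hr i)
      · rw [hsum]; exact hrs
    have heach := (Finset.sum_eq_sum_iff_of_le (fun i _ => hr i)).mp hsums
    intro k
    have hk := heach k (Finset.mem_univ k)
    rw [hk]
    exact (ENNReal.ofReal_toReal (hUfin k)).symm
  -- the complement of ⋃ U k in the closed ball is null
  have hcompl : volume (Metric.closedBall (0:E2') 1 \ ⋃ j, U j) = 0 := by
    have hUU : volume (⋃ j, U j) = ENNReal.ofReal Real.pi := by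
      rw [measure_iUnion hdisj (fun k => (hUopen k).measurableSet), tsum_fintype]
      simp_rw [hUvol]
      exact hofsum
    have hmeasU : MeasurableSet (⋃ j, U j) :=
      MeasurableSet.iUnion (fun k => (hUopen k).measurableSet)
    have hsubU : (⋃ j, U j) ⊆ Metric.closedBall (0:E2') 1 :=
      Set.iUnion_subset (fun k => (Set.inter_subset_left).trans Metric.ball_subset_closedBall)
    have := measure_diff hsubU hmeasU.nullMeasurableSet (by rw [hUU]; exact ENNReal.ofReal_ne_top)
    rw [this, hUU, vol_cb', tsub_self]
  -- conclusion
  intro k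
  apply le_antisymm
  · have hCsub : C k ⊆ U k ∪ (Metric.closedBall (0:E2') 1 \ ⋃ j, U j) := by
      intro y hy
      have hycb : y ∈ Metric.closedBall (0:E2') 1 := by
        rw [hC k] at hy; exact hy.1
      by_cases hyU : y ∈ ⋃ j, U j
      · obtain ⟨j, hj⟩ := Set.mem_iUnion.mp hyU
        by_cases hjk : j = k
        · exact Or.inl (hjk ▸ hj)
        · exact absurd hj (hCU j k hjk y hy)
      · exact Or.inr ⟨hycb, hyU⟩
    calc volume (C k) ≤ volume (U k ∪ (Metric.closedBall (0:E2') 1 \ ⋃ j, U j)) :=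
        measure_mono hCsub
    _ ≤ volume (U k) + volume (Metric.closedBall (0:E2') 1 \ ⋃ j, U j) := measure_union_le _ _
    _ = ENNReal.ofReal (α k) := by rw [hcompl, add_zero, hUvol k]
  · rw [← hUvol k]
    exact measure_mono (hUC k)
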